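/- Let P be a logic program over a finite set of atoms A and let π be a symmetry of P. Then the map γ defined by γ (a, pos) = (π a, pos), γ (a, neg) = (π a, neg) for a ∈ A, and γ r = r^π for r ∈ P, is a colour-preserving automorphism of the coloured digraph G_P. -/

import Mathlib

/-- A (disjunctive) rule over a set of atoms `A`: a triple of finite sets of atoms
(head, positive body, negative body). -/
structure Rule (A : Type*) where
  head : Finset A
  pos : Finset A
  neg : Finset A
deriving DecidableEq

variable {A : Type*} [DecidableEq A]

/-- `M` is a model of a rule `(H, B⁺, ∅)` (the negative body is ignored; it is used
only on rules of reducts, whose negative bodies are empty): if `B⁺ ⊆ M` then `H ∩ M ≠ ∅`. -/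
def Rule.models (M : Finset A) (r : Rule A) : Prop :=
  r.pos ⊆ M → (r.head ∩ M).Nonempty

/-- The reduct `P^M` of a program `P` relative to `M`. -/
def reduct (P : Finset (Rule A)) (M : Finset A) : Finset (Rule A) :=
  (P.filter fun r => r.neg ∩ M = ∅).image fun r => ⟨r.head, r.pos, ∅⟩

/-- `M` is a ⊆-minimal model of the set of rules `Q`. -/
def IsMinModel (Q : Finset (Rule A)) (M : Finset A) : Prop :=
  (∀ r ∈ Q, Rule.models M r) ∧ ∀ N : Finset A, N ⊂ M → ¬ (∀ r ∈ Q, Rule.models N r)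

/-- `M` is an answer set of `P` if `M` is a ⊆-minimal model of the reduct `P^M`. -/
def IsAnswerSet (P : Finset (Rule A)) (M : Finset A) : Prop :=
  IsMinModel (reduct P M) M

/-- The image of a rule under a permutation of atoms. -/
def Rule.perm (π : Equiv.Perm A) (r : Rule A) : Rule A :=
  ⟨r.head.image π, r.pos.image π, r.neg.image π⟩

/-- The image of a program under a permutation of atoms. -/
def permProg (π : Equiv.Perm A) (P : Finset (Rule A)) : Finset (Rule A) :=
  P.image (Rule.perm π)

/-- A symmetry of a logic program `P` is a permutation of its atoms that does not
change `P`. -/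
def IsSymmetry (π : Equiv.Perm A) (P : Finset (Rule A)) : Prop :=
  permProg π P = P

/-- The vertex set of the coloured digraph `G_P` of a program `P`:
positive/negative literal vertices `(a, pos)`/`(a, neg)` (with `pos = true`,
`neg = false`), plus one vertex for each rule of `P`. -/
def Vertex (A : Type*) (P : Finset (Rule A)) : Type _ :=
  (A × Bool) ⊕ {r : Rule A // r ∈ P}

/-- The colouring of `G_P`: colour 1 for positive-literal vertices, colour 2 for
negative-literal vertices, colour 3 for rule vertices. -/
def colour {A : Type*} {P : Finset (Rule A)} : Vertex A P → Fin 3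
  | Sum.inl (_, true) => 0
  | Sum.inl (_, false) => 1
  | Sum.inr _ => 2

/-- The edge relation of `G_P`: consistency edges `(a, pos) → (a, neg)` for every
atom `a`, and for every rule `r ∈ P` the edges `(b, pos) → r` for `b ∈ pos r`,
`(c, neg) → r` for `c ∈ neg r`, and `r → (a, pos)` for `a ∈ head r`. -/
def Edge {A : Type*} (P : Finset (Rule A)) : Vertex A P → Vertex A P → Prop
  | Sum.inl (a, true), Sum.inl (b, false) => a = b
  | Sum.inl (b, true), Sum.inr r => b ∈ (r : Rule A).pos
  | Sum.inl (c, false), Sum.inr r => c ∈ (r : Rule A).neg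
  | Sum.inr r, Sum.inl (a, true) => a ∈ (r : Rule A).head
  | _, _ => False


lemma Rule.perm_perm_inv {A : Type*} [DecidableEq A] (π : Equiv.Perm A) (r : Rule A) :
    Rule.perm π⁻¹ (Rule.perm π r) = r := by
  cases r; simp [Rule.perm, Finset.image_image, Function.comp_def]

lemma Rule.perm_inv_perm {A : Type*} [DecidableEq A] (π : Equiv.Perm A) (r : Rule A) :
    Rule.perm π (Rule.perm π⁻¹ r) = r := by
  cases r; simp [Rule.perm, Finset.image_image, Function.comp_def]

lemma mem_of_symm {A : Type*} [DecidableEq A] {π : Equiv.Perm A} {P : Finset (Rule A)}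
    (hπ : IsSymmetry π P) {r : Rule A} (hr : r ∈ P) : Rule.perm π r ∈ P := by
  rw [← hπ]; exact Finset.mem_image_of_mem _ hr

lemma mem_of_symm_inv {A : Type*} [DecidableEq A] {π : Equiv.Perm A} {P : Finset (Rule A)}
    (hπ : IsSymmetry π P) {r : Rule A} (hr : r ∈ P) : Rule.perm π⁻¹ r ∈ P := by
  conv at hr => rw [← hπ]
  obtain ⟨s, hs, rfl⟩ := Finset.mem_image.mp hr
  rwa [Rule.perm_perm_inv]

def gammaEquiv {A : Type*} [DecidableEq A] (π : Equiv.Perm A) (P : Finset (Rule A))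
    (hπ : IsSymmetry π P) : Vertex A P ≃ Vertex A P where
  toFun v := match v with
    | Sum.inl (a, b) => Sum.inl (π a, b)
    | Sum.inr r => Sum.inr ⟨Rule.perm π r.1, mem_of_symm hπ r.2⟩
  invFun v := match v with
    | Sum.inl (a, b) => Sum.inl (π⁻¹ a, b)
    | Sum.inr r => Sum.inr ⟨Rule.perm π⁻¹ r.1, mem_of_symm_inv hπ r.2⟩
  left_inv := by rintro (⟨a, b⟩ | r) <;> simp [Rule.perm_perm_inv] <;> rfl
  right_inv := by rintro (⟨a, b⟩ | r) <;> simp [Rule.perm_inv_perm] <;> rfl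

/-- **Symmetries of `P` induce coloured-digraph automorphisms of `G_P`.**
If `π` is a symmetry of a logic program `P` over a finite set of atoms `A`, then the
map `γ` defined by `γ (a, pos) = (π a, pos)`, `γ (a, neg) = (π a, neg)` and
`γ r = r^π` is a colour-preserving automorphism of the coloured digraph `G_P`. -/
theorem symmetry_induces_graph_automorphism {A : Type*} [DecidableEq A] [Fintype A]
    (P : Finset (Rule A)) (π : Equiv.Perm A) (hπ : IsSymmetry π P) :
    ∃ γ : Vertex A P ≃ Vertex A P,
      (∀ (a : A) (b : Bool), γ (Sum.inl (a, b)) = Sum.inl (π a, b)) ∧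
      (∀ (r : Rule A) (hr : r ∈ P) (hr' : Rule.perm π r ∈ P),
        γ (Sum.inr ⟨r, hr⟩) = Sum.inr ⟨Rule.perm π r, hr'⟩) ∧
      (∀ v : Vertex A P, colour (γ v) = colour v) ∧
      (∀ u v : Vertex A P, Edge P u v ↔ Edge P (γ u) (γ v)) := by
  refine ⟨gammaEquiv π P hπ, fun a b => rfl, fun r hr hr' => rfl, ?_, ?_⟩
  · rintro (⟨a, _ | _⟩ | r) <;> rfl
  · rintro (⟨a, _ | _⟩ | r) (⟨b, _ | _⟩ | s) <;>
      simp [gammaEquiv, Edge, Rule.perm, Finset.mem_image, π.injective.eq_iff]
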